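/- arXiv:1802.09714 — 6 statements merged into one kernel-verified Lean document; each statement's English description precedes it below -/
import Mathlib

section
/- Let d, M be positive integers, x_1, …, x_M ∈ ℝ^d, r_1, …, r_M ∈ ℝ, ζ > 0, ε > 0. Define g(w, u) = Σ_{i=1}^M [u_i (r_i − ⟨x_i, w⟩)² + (1 − u_i) ε] + ζ‖w‖² and u*(w)_i = 1 if (r_i − ⟨x_i, w⟩)² < ε, else 0. Let w⁽⁰⁾ ∈ ℝ^d be arbitrary and for t ≥ 0 set u⁽ᵗ⁾ = u*(w⁽ᵗ⁾) and w⁽ᵗ⁺¹⁾ = (Σ_{i=1}^M u_i⁽ᵗ⁾ x_i x_iᵀ + ζ I)⁻¹ (Σ_{i=1}^M u_i⁽ᵗ⁾ r_i x_i). Then for every t ≥ 1, g(w⁽ᵗ⁻¹⁾, u⁽ᵗ⁻¹⁾) ≥ g(w⁽ᵗ⁾, u⁽ᵗ⁾) + ζ‖w⁽ᵗ⁾ − w⁽ᵗ⁻¹⁾‖². -/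
open scoped RealInnerProductSpace

private lemma sum_app {d M : ℕ} (f : Fin M → EuclideanSpace ℝ (Fin d)) (j : Fin d) :
    (∑ i, f i) j = ∑ i, f i j := by
  rw [WithLp.ofLp_sum, Finset.sum_apply]

/-- Lemma 1 of the paper: sufficient decrease of the surrogate
along the reweighted iteration. -/
theorem stmt_6 (d M : ℕ) (hd : 0 < d) (hM : 0 < M)
    (x : Fin M → EuclideanSpace ℝ (Fin d)) (r : Fin M → ℝ)
    (ζ ε : ℝ) (hζ : 0 < ζ) (hε : 0 < ε)
    (g : EuclideanSpace ℝ (Fin d) → (Fin M → ℝ) → ℝ)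
    (hg : ∀ w' u', g w' u' =
      (∑ i, (u' i * (r i - ⟪x i, w'⟫) ^ 2 + (1 - u' i) * ε)) + ζ * ‖w'‖ ^ 2)
    (w : ℕ → EuclideanSpace ℝ (Fin d)) (u : ℕ → Fin M → ℝ)
    (hu : ∀ t i, u t i = if (r i - ⟪x i, w t⟫) ^ 2 < ε then 1 else 0)
    (hw : ∀ t, w (t + 1) =
      ((∑ i, u t i • Matrix.vecMulVec (x i) (x i)) +
        ζ • (1 : Matrix (Fin d) (Fin d) ℝ))⁻¹.mulVec (∑ i, u t i • r i • x i)) :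
    ∀ t : ℕ, 1 ≤ t →
      g (w (t - 1)) (u (t - 1)) ≥ g (w t) (u t) + ζ * ‖w t - w (t - 1)‖ ^ 2 := by
  intro t ht
  obtain ⟨s, rfl⟩ : ∃ s, t = s + 1 := ⟨t - 1, (Nat.succ_pred_eq_of_pos ht).symm⟩
  simp only [Nat.add_sub_cancel]
  have hnn : ∀ i, 0 ≤ u s i := by
    intro i; rw [hu s i]; split <;> norm_num
  have h01 : ∀ i, u s i = 0 ∨ u s i = 1 := by
    intro i; rw [hu s i]; split
    · exact Or.inr rfl
    · exact Or.inl rfl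
  set A : Matrix (Fin d) (Fin d) ℝ :=
    (∑ i, u s i • Matrix.vecMulVec (x i) (x i)) + ζ • (1 : Matrix (Fin d) (Fin d) ℝ) with hAdef
  have hAapp : ∀ j k, A j k = (∑ i, u s i * (x i j * x i k)) + ζ * (if j = k then 1 else 0) := by
    intro j k
    simp [hAdef, Matrix.sum_apply, Matrix.vecMulVec_apply, Matrix.one_apply, mul_assoc]
  have hAmul : ∀ v : EuclideanSpace ℝ (Fin d),
      A.mulVec v = (∑ i, (u s i * ⟪x i, v⟫) • x i) + ζ • v := by
    intro v
    funext j
    simp only [Matrix.mulVec, dotProduct, hAapp, add_mul, Finset.sum_add_distrib,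
      Finset.sum_mul, Pi.add_apply, Finset.sum_apply, Pi.smul_apply, smul_eq_mul,
      PiLp.inner_apply, RCLike.inner_apply, conj_trivial, ite_mul, one_mul, zero_mul,
      mul_ite, mul_zero, mul_one, Finset.sum_ite_eq, Finset.mem_univ, if_true]
    have hr : (∑ i : Fin M, (u s i * ∑ k, x i k * v k) • x i : EuclideanSpace ℝ (Fin d)) j
        = ∑ i, (u s i * ∑ k, x i k * v k) * x i j := by
      rw [sum_app]; rfl
    rw [sum_app]; simp only [WithLp.ofLp_smul, Pi.smul_apply, smul_eq_mul]
    congr 1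
    rw [Finset.sum_comm]
    refine Finset.sum_congr rfl fun i _ => ?_
    rw [Finset.mul_sum, Finset.sum_mul]
    exact Finset.sum_congr rfl fun k _ => by ring
  -- dot product with A
  have hdot : ∀ v : EuclideanSpace ℝ (Fin d),
      dotProduct v (A.mulVec v) = (∑ i, u s i * ⟪x i, v⟫ ^ 2) + ζ * ‖v‖ ^ 2 := by
    intro v
    rw [hAmul v]
    have : dotProduct v ((∑ i, (u s i * ⟪x i, v⟫) • x i) + ζ • v)
        = ⟪v, (∑ i, (u s i * ⟪x i, v⟫) • x i) + ζ • v⟫ := by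
      simp [dotProduct, PiLp.inner_apply]
      exact Finset.sum_congr rfl fun _ _ => mul_comm _ _
    rw [this, inner_add_right, inner_sum, real_inner_smul_right,
      real_inner_self_eq_norm_sq]
    congr 1
    refine Finset.sum_congr rfl fun i _ => ?_
    rw [real_inner_smul_right, real_inner_comm]
    ring
  -- A is positive definite
  have hApos : A.PosDef := by
    refine Matrix.PosDef.of_dotProduct_mulVec_pos ?_ ?_
    · show Matrix.conjTranspose A = A
      ext j k
      simp only [Matrix.conjTranspose_apply, hAapp, star_trivial]
      have h2 : (if k = j then (1:ℝ) else 0) = (if j = k then 1 else 0) := by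
        by_cases h : j = k <;> simp [h, eq_comm]
      rw [h2]
      refine congrArg₂ _ (Finset.sum_congr rfl fun i _ => by ring) rfl
    · intro v hv
      have hv' : (WithLp.toLp 2 v : EuclideanSpace ℝ (Fin d)) ≠ 0 := by simpa using hv
      have := hdot (WithLp.toLp 2 v)
      simp only [star_trivial]
      rw [this]
      have h1 : 0 ≤ ∑ i, u s i * ⟪x i, (WithLp.toLp 2 v : EuclideanSpace ℝ (Fin d))⟫ ^ 2 :=
        Finset.sum_nonneg fun i _ => mul_nonneg (hnn i) (sq_nonneg _)
      have hv2 : (0:ℝ) < ‖(WithLp.toLp 2 v : EuclideanSpace ℝ (Fin d))‖ := norm_pos_iff.mpr hv'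
      have h2 : 0 < ζ * ‖(WithLp.toLp 2 v : EuclideanSpace ℝ (Fin d))‖ ^ 2 :=
        mul_pos hζ (pow_pos hv2 2)
      exact add_pos_of_nonneg_of_pos h1 h2
  -- the normal equations
  set ws := w (s + 1) with hws'
  have hA : A.mulVec ws = ∑ i, u s i • r i • x i := by
    rw [hws', hw s, Matrix.mulVec_mulVec, Matrix.mul_nonsing_inv _ hApos.det_pos.ne'.isUnit,
      Matrix.one_mulVec]
    simp [WithLp.ofLp_sum]
  have hkey : (∑ i, (u s i * ⟪x i, ws⟫) • x i) + ζ • ws = ∑ i, u s i • r i • x i := by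
    apply WithLp.ofLp_injective 2; rw [WithLp.ofLp_add, WithLp.ofLp_smul, ← hAmul]; exact hA
  have hζw : ζ • ws = ∑ i, (u s i * (r i - ⟪x i, ws⟫)) • x i := by
    have : (∑ i, (u s i * (r i - ⟪x i, ws⟫)) • x i : EuclideanSpace ℝ (Fin d))
        = (∑ i, u s i • r i • x i) - ∑ i, (u s i * ⟪x i, ws⟫) • x i := by
      rw [← Finset.sum_sub_distrib]
      refine Finset.sum_congr rfl fun i _ => ?_
      rw [smul_smul, ← sub_smul]
      congr 1
      ring
    rw [this, ← hkey]
    abel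
  have hstat : ∀ v : EuclideanSpace ℝ (Fin d),
      ζ * ⟪ws, v⟫ = ∑ i, u s i * (r i - ⟪x i, ws⟫) * ⟪x i, v⟫ := by
    intro v
    have h := congrArg (fun z : EuclideanSpace ℝ (Fin d) => ⟪z, v⟫) hζw
    simp only [sum_inner, real_inner_smul_left] at h
    exact h
  set δ : EuclideanSpace ℝ (Fin d) := w s - ws with hδ
  have hwd : w s = ws + δ := by rw [hδ]; abel
  -- quadratic expansion
  have hexp : (∑ i, u s i * (r i - ⟪x i, w s⟫) ^ 2) + ζ * ‖w s‖ ^ 2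
      = ((∑ i, u s i * (r i - ⟪x i, ws⟫) ^ 2) + ζ * ‖ws‖ ^ 2)
        + ((∑ i, u s i * ⟪x i, δ⟫ ^ 2) + ζ * ‖δ‖ ^ 2)
        + 2 * (ζ * ⟪ws, δ⟫ - ∑ i, u s i * (r i - ⟪x i, ws⟫) * ⟪x i, δ⟫) := by
    rw [hwd, norm_add_sq_real]
    have hterm : ∀ i, u s i * (r i - ⟪x i, ws + δ⟫) ^ 2
        = u s i * (r i - ⟪x i, ws⟫) ^ 2 + u s i * ⟪x i, δ⟫ ^ 2
          - 2 * (u s i * (r i - ⟪x i, ws⟫) * ⟪x i, δ⟫) := by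
      intro i
      rw [inner_add_right]
      ring
    rw [Finset.sum_congr rfl fun i _ => hterm i]
    rw [Finset.sum_sub_distrib, Finset.sum_add_distrib, ← Finset.mul_sum]
    ring
  have hlin : ζ * ⟪ws, δ⟫ - ∑ i, u s i * (r i - ⟪x i, ws⟫) * ⟪x i, δ⟫ = 0 := by
    rw [hstat δ]; ring
  -- first inequality: g (w s) (u s) ≥ g ws (u s) + ζ‖δ‖²
  have hsplit : ∀ w' : EuclideanSpace ℝ (Fin d), g w' (u s)
      = ((∑ i, u s i * (r i - ⟪x i, w'⟫) ^ 2) + ζ * ‖w'‖ ^ 2)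
        + ∑ i, (1 - u s i) * ε := by
    intro w'
    rw [hg, Finset.sum_add_distrib]
    ring
  have hq : 0 ≤ ∑ i, u s i * ⟪x i, δ⟫ ^ 2 :=
    Finset.sum_nonneg fun i _ => mul_nonneg (hnn i) (sq_nonneg _)
  have hineq1 : g (w s) (u s) ≥ g ws (u s) + ζ * ‖δ‖ ^ 2 := by
    rw [hsplit (w s), hsplit ws, hexp, hlin]
    linarith
  -- second inequality: g ws (u s) ≥ g ws (u (s+1))
  have hineq2 : g ws (u s) ≥ g ws (u (s + 1)) := by
    rw [hg, hg]
    apply add_le_add_left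
    refine Finset.sum_le_sum fun i _ => ?_
    rw [hu (s + 1) i, ← hws']
    rcases h01 i with h | h <;> rw [h] <;> split_ifs with hlt
    · have := le_of_lt hlt
      nlinarith [sq_nonneg (r i - ⟪x i, ws⟫)]
    · norm_num
    · norm_num
    · have := not_lt.mp hlt
      nlinarith
  have hnrm : ‖w (s + 1) - w s‖ = ‖δ‖ := by rw [hδ, ← hws', norm_sub_rev]
  rw [hnrm]
  linarith
end

section
/- Let d, M be positive integers, x_1, …, x_M ∈ ℝ^d, r_1, …, r_M ∈ ℝ, ζ > 0, ε > 0. Define the capped-ℓ2 objective O(w) = Σ_{i=1}^M min((r_i − ⟨x_i, w⟩)², ε) + ζ‖w‖² and u*(w)_i = 1 if (r_i − ⟨x_i, w⟩)² < ε, else 0. Let w⁽⁰⁾ ∈ ℝ^d and for t ≥ 0 set u⁽ᵗ⁾ = u*(w⁽ᵗ⁾) and w⁽ᵗ⁺¹⁾ = (Σ_{i=1}^M u_i⁽ᵗ⁾ x_i x_iᵀ + ζ I)⁻¹ (Σ_{i=1}^M u_i⁽ᵗ⁾ r_i x_i). Then for every t ≥ 1, O(w⁽ᵗ⁻¹⁾)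 ≥ O(w⁽ᵗ⁾) + ζ‖w⁽ᵗ⁾ − w⁽ᵗ⁻¹⁾‖²; in particular the sequence (O(w⁽ᵗ⁾))_{t≥0} is nonincreasing. -/
open scoped RealInnerProductSpace
open Matrix

private lemma aux_sum_dot {d M : ℕ} (f : Fin M → (Fin d → ℝ)) (a : Fin d → ℝ) :
    (∑ i, f i) ⬝ᵥ a = ∑ i, f i ⬝ᵥ a := by
  induction (Finset.univ : Finset (Fin M)) using Finset.induction with
  | empty => simp
  | insert _ _ h ih => simp [Finset.sum_insert h, add_dotProduct, ih]

private lemma aux_sum_mulVec {d M : ℕ} (f : Fin M → Matrix (Fin d) (Fin d) ℝ) (v : Fin d → ℝ) :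
    (∑ i, f i) *ᵥ v = ∑ i, f i *ᵥ v := by
  induction (Finset.univ : Finset (Fin M)) using Finset.induction with
  | empty => simp
  | insert _ _ h ih => simp [Finset.sum_insert h, Matrix.add_mulVec, ih]

private lemma aux_vecMulVec_mulVec {d : ℕ} (a b v : Fin d → ℝ) :
    Matrix.vecMulVec a b *ᵥ v = (b ⬝ᵥ v) • a := by
  funext j
  simp [Matrix.mulVec, Matrix.vecMulVec_apply, dotProduct, Finset.mul_sum,
    mul_assoc, mul_comm, mul_left_comm]

private lemma aux_inner_eq_dot {d : ℕ} (a b : EuclideanSpace ℝ (Fin d)) :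
    ⟪a, b⟫ = (a : Fin d → ℝ) ⬝ᵥ (b : Fin d → ℝ) := by
  simp [PiLp.inner_apply, dotProduct, mul_comm]

private lemma aux_normsq_eq_dot {d : ℕ} (a : EuclideanSpace ℝ (Fin d)) :
    ‖a‖ ^ 2 = (a : Fin d → ℝ) ⬝ᵥ (a : Fin d → ℝ) := by
  rw [← real_inner_self_eq_norm_sq, aux_inner_eq_dot]

private lemma aux_step (d M : ℕ)
    (x : Fin M → EuclideanSpace ℝ (Fin d)) (r : Fin M → ℝ)
    (ζ ε : ℝ) (hζ : 0 < ζ) (hε : 0 < ε)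
    (O : EuclideanSpace ℝ (Fin d) → ℝ)
    (hO : ∀ w', O w' = (∑ i, min ((r i - ⟪x i, w'⟫) ^ 2) ε) + ζ * ‖w'‖ ^ 2)
    (w : ℕ → EuclideanSpace ℝ (Fin d)) (u : ℕ → Fin M → ℝ)
    (hu : ∀ t i, u t i = if (r i - ⟪x i, w t⟫) ^ 2 < ε then 1 else 0)
    (hw : ∀ t, w (t + 1) =
      ((∑ i, u t i • Matrix.vecMulVec (x i) (x i)) +
        ζ • (1 : Matrix (Fin d) (Fin d) ℝ))⁻¹.mulVec (∑ i, u t i • r i • x i))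
    (t : ℕ) : O (w t) ≥ O (w (t + 1)) + ζ * ‖w (t + 1) - w t‖ ^ 2 := by
  have hc01 : ∀ i, u t i = 0 ∨ u t i = 1 := by
    intro i; rw [hu]; split <;> simp
  have hc0 : ∀ i, 0 ≤ u t i := by
    intro i; rcases hc01 i with h | h <;> rw [h] <;> norm_num
  obtain ⟨X, hX⟩ : ∃ X : Fin M → Fin d → ℝ, ∀ i, X i = (x i : Fin d → ℝ) :=
    ⟨fun i => x i, fun _ => rfl⟩
  obtain ⟨wo, hwo⟩ : ∃ v : Fin d → ℝ, v = (w t : Fin d → ℝ) := ⟨_, rfl⟩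
  obtain ⟨wn, hwn⟩ : ∃ v : Fin d → ℝ, v = (w (t + 1) : Fin d → ℝ) := ⟨_, rfl⟩
  obtain ⟨δ, hδ⟩ : ∃ v : Fin d → ℝ, v = wn - wo := ⟨_, rfl⟩
  set A : Matrix (Fin d) (Fin d) ℝ :=
      (∑ i, u t i • Matrix.vecMulVec (x i) (x i)) + ζ • (1 : Matrix (Fin d) (Fin d) ℝ)
      with hA
  set bb : EuclideanSpace ℝ (Fin d) := ∑ i, u t i • r i • x i with hbb
  have hw' : w (t + 1) = A⁻¹ *ᵥ bb := by rw [hw t, hbb, WithLp.ofLp_sum]; rfl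
  -- action of A on vectors
  have hAv : ∀ v : Fin d → ℝ,
      A *ᵥ v = (∑ i, (u t i * (X i ⬝ᵥ v)) • X i) + ζ • v := by
    intro v
    rw [hA, Matrix.add_mulVec, Matrix.smul_mulVec, Matrix.one_mulVec,
      aux_sum_mulVec]
    congr 1
    refine Finset.sum_congr rfl fun i _ => ?_
    rw [hX i, Matrix.smul_mulVec, aux_vecMulVec_mulVec, smul_smul]
  have hdotA : ∀ v z : Fin d → ℝ,
      (A *ᵥ v) ⬝ᵥ z = (∑ i, u t i * ((X i ⬝ᵥ v) * (X i ⬝ᵥ z))) + ζ * (v ⬝ᵥ z) := by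
    intro v z
    rw [hAv, add_dotProduct, smul_dotProduct, aux_sum_dot]
    congr 1
    refine Finset.sum_congr rfl fun i _ => ?_
    rw [smul_dotProduct]
    simp [smul_eq_mul, mul_assoc]
  -- positive definiteness and the normal equations
  have hposd : A.PosDef := by
    rw [Matrix.posDef_iff_dotProduct_mulVec]
    constructor
    · show Aᴴ = A
      rw [hA]
      ext j k
      simp [Matrix.conjTranspose_apply, Matrix.add_apply, Matrix.sum_apply,
        Matrix.smul_apply, Matrix.vecMulVec_apply, Matrix.one_apply, eq_comm,
        mul_comm, mul_left_comm]
    · intro v hv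
      have hs : star v = v := by simp
      rw [hs, dotProduct_comm, hdotA]
      have h1 : 0 ≤ ∑ i, u t i * ((X i ⬝ᵥ v) * (X i ⬝ᵥ v)) :=
        Finset.sum_nonneg fun i _ => mul_nonneg (hc0 i) (mul_self_nonneg _)
      have h2 : 0 < v ⬝ᵥ v := by
        obtain ⟨j, hj⟩ := Function.ne_iff.1 hv
        refine Finset.sum_pos' (fun i _ => mul_self_nonneg _) ⟨j, Finset.mem_univ j, ?_⟩
        exact mul_self_pos.2 (by simpa using hj)
      nlinarith
  have hdet : IsUnit A.det := (Matrix.isUnit_iff_isUnit_det A).mp hposd.isUnit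
  have hAw : A *ᵥ wn = (bb : Fin d → ℝ) := by
    rw [hwn, hw', Matrix.mulVec_mulVec, Matrix.mul_nonsing_inv A hdet, Matrix.one_mulVec]
  -- the normal equations, dotted with δ
  have hbdot : (bb : Fin d → ℝ) ⬝ᵥ δ = ∑ i, u t i * (r i * (X i ⬝ᵥ δ)) := by
    rw [hbb, WithLp.ofLp_sum, aux_sum_dot]
    refine Finset.sum_congr rfl fun i _ => ?_
    rw [WithLp.ofLp_smul, WithLp.ofLp_smul, smul_dotProduct, smul_dotProduct, hX i]
    simp [smul_eq_mul, mul_assoc]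
  have horth : (∑ i, u t i * ((r i - X i ⬝ᵥ wn) * (X i ⬝ᵥ δ))) = ζ * (wn ⬝ᵥ δ) := by
    have h := congrArg (· ⬝ᵥ δ) hAw
    simp only at h
    rw [hdotA, hbdot] at h
    have hsplit : (∑ i, u t i * ((r i - X i ⬝ᵥ wn) * (X i ⬝ᵥ δ)))
        = (∑ i, u t i * (r i * (X i ⬝ᵥ δ)))
          - ∑ i, u t i * ((X i ⬝ᵥ wn) * (X i ⬝ᵥ δ)) := by
      rw [← Finset.sum_sub_distrib]
      exact Finset.sum_congr rfl fun i _ => by ring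
    rw [hsplit]
    linarith
  -- quadratic decrease
  have hxdot : ∀ i : Fin M, X i ⬝ᵥ wo = X i ⬝ᵥ wn - X i ⬝ᵥ δ := by
    intro i
    rw [hδ, dotProduct_sub]
    ring
  have hwodot : wo ⬝ᵥ wo = wn ⬝ᵥ wn - 2 * (wn ⬝ᵥ δ) + δ ⬝ᵥ δ := by
    rw [hδ]
    simp only [dotProduct_sub, sub_dotProduct]
    rw [dotProduct_comm wo wn]
    ring
  have hsum : (∑ i, u t i * (r i - X i ⬝ᵥ wo) ^ 2)
      = (∑ i, u t i * (r i - X i ⬝ᵥ wn) ^ 2)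
        + 2 * (∑ i, u t i * ((r i - X i ⬝ᵥ wn) * (X i ⬝ᵥ δ)))
        + ∑ i, u t i * (X i ⬝ᵥ δ) ^ 2 := by
    rw [Finset.mul_sum, ← Finset.sum_add_distrib, ← Finset.sum_add_distrib]
    refine Finset.sum_congr rfl fun i _ => ?_
    rw [hxdot i]
    ring
  have hδnn : 0 ≤ ∑ i, u t i * (X i ⬝ᵥ δ) ^ 2 :=
    Finset.sum_nonneg fun i _ => mul_nonneg (hc0 i) (sq_nonneg _)
  have hQ : (∑ i, u t i * (r i - X i ⬝ᵥ wo) ^ 2) + ζ * (wo ⬝ᵥ wo)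
      ≥ (∑ i, u t i * (r i - X i ⬝ᵥ wn) ^ 2) + ζ * (wn ⬝ᵥ wn) + ζ * (δ ⬝ᵥ δ) := by
    rw [hsum, hwodot, horth]
    nlinarith [hδnn]
  -- relate objective to the weighted quadratic
  have hmin_old : ∀ i : Fin M, min ((r i - ⟪x i, w t⟫) ^ 2) ε
      = u t i * (r i - X i ⬝ᵥ wo) ^ 2 + (1 - u t i) * ε := by
    intro i
    have hd : ⟪x i, w t⟫ = X i ⬝ᵥ wo := by rw [hX i, hwo]; exact aux_inner_eq_dot _ _
    rw [hu t i, hd]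
    split_ifs with h
    · rw [min_eq_left (le_of_lt h)]; ring
    · rw [min_eq_right (not_lt.1 h)]; ring
  have hmin_new : ∀ i : Fin M, min ((r i - ⟪x i, w (t + 1)⟫) ^ 2) ε
      ≤ u t i * (r i - X i ⬝ᵥ wn) ^ 2 + (1 - u t i) * ε := by
    intro i
    have hd : ⟪x i, w (t + 1)⟫ = X i ⬝ᵥ wn := by rw [hX i, hwn]; exact aux_inner_eq_dot _ _
    rw [hd]
    rcases hc01 i with h | h <;> rw [h]
    · simpa using min_le_right ((r i - X i ⬝ᵥ wn) ^ 2) ε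
    · simpa using min_le_left ((r i - X i ⬝ᵥ wn) ^ 2) ε
  have hnormo : ‖w t‖ ^ 2 = wo ⬝ᵥ wo := by rw [hwo]; exact aux_normsq_eq_dot _
  have hnormn : ‖w (t + 1)‖ ^ 2 = wn ⬝ᵥ wn := by rw [hwn]; exact aux_normsq_eq_dot _
  have hOold : O (w t) = (∑ i, u t i * (r i - X i ⬝ᵥ wo) ^ 2)
      + (∑ i, (1 - u t i) * ε) + ζ * (wo ⬝ᵥ wo) := by
    rw [hO, hnormo, Finset.sum_congr rfl fun i _ => hmin_old i, Finset.sum_add_distrib]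
  have hOnew : O (w (t + 1)) ≤ (∑ i, u t i * (r i - X i ⬝ᵥ wn) ^ 2)
      + (∑ i, (1 - u t i) * ε) + ζ * (wn ⬝ᵥ wn) := by
    rw [hO, hnormn]
    have h2 := Finset.sum_le_sum fun i (_ : i ∈ Finset.univ) => hmin_new i
    rw [Finset.sum_add_distrib] at h2
    linarith
  have hnd : ‖w (t + 1) - w t‖ ^ 2 = δ ⬝ᵥ δ := by
    rw [hδ, hwn, hwo]; exact aux_normsq_eq_dot _
  rw [ge_iff_le, hnd]
  linarith

/-- sufficient decrease of the capped-ℓ2 objective along the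
reweighted iteration; in particular the objective values are nonincreasing. -/
theorem stmt_7 (d M : ℕ) (hd : 0 < d) (hM : 0 < M)
    (x : Fin M → EuclideanSpace ℝ (Fin d)) (r : Fin M → ℝ)
    (ζ ε : ℝ) (hζ : 0 < ζ) (hε : 0 < ε)
    (O : EuclideanSpace ℝ (Fin d) → ℝ)
    (hO : ∀ w', O w' = (∑ i, min ((r i - ⟪x i, w'⟫) ^ 2) ε) + ζ * ‖w'‖ ^ 2)
    (w : ℕ → EuclideanSpace ℝ (Fin d)) (u : ℕ → Fin M → ℝ)
    (hu : ∀ t i, u t i = if (r i - ⟪x i, w t⟫) ^ 2 < ε then 1 else 0)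
    (hw : ∀ t, w (t + 1) =
      ((∑ i, u t i • Matrix.vecMulVec (x i) (x i)) +
        ζ • (1 : Matrix (Fin d) (Fin d) ℝ))⁻¹.mulVec (∑ i, u t i • r i • x i)) :
    (∀ t : ℕ, 1 ≤ t → O (w (t - 1)) ≥ O (w t) + ζ * ‖w t - w (t - 1)‖ ^ 2) ∧
    (∀ s t : ℕ, s ≤ t → O (w t) ≤ O (w s)) := by
  have hstep := aux_step d M x r ζ ε hζ hε O hO w u hu hw
  constructor
  · intro t ht
    obtain ⟨s, rfl⟩ := Nat.exists_eq_add_of_le ht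
    rw [Nat.add_comm 1 s]
    simpa using hstep s
  · intro s t hst
    induction t, hst using Nat.le_induction with
    | base => exact le_refl _
    | succ n hn ih =>
      have h1 := hstep n
      have h2 : 0 ≤ ζ * ‖w (n + 1) - w n‖ ^ 2 :=
        mul_nonneg (le_of_lt hζ) (sq_nonneg _)
      linarith
end

section
/- Let d, M be positive integers, x_1, …, x_M ∈ ℝ^d, r_1, …, r_M ∈ ℝ, ζ > 0, ε > 0. Define u*(w)_i = 1 if (r_i − ⟨x_i, w⟩)² < ε, else 0. Let w⁽⁰⁾ ∈ ℝ^d and for t ≥ 0 set u⁽ᵗ⁾ = u*(w⁽ᵗ⁾) and w⁽ᵗ⁺¹⁾ = (Σ_{i=1}^M u_i⁽ᵗ⁾ x_i x_iᵀ + ζ I)⁻¹ (Σ_{i=1}^M u_i⁽ᵗ⁾ r_i x_i). Then the series Σ_{t=1}^∞ ‖w⁽ᵗ⁾ − w⁽ᵗ⁻¹⁾‖² converges (the family (‖w⁽ᵗ⁾ − w⁽ᵗ⁻¹⁾‖²)_{t≥1} is summable). -/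
open scoped RealInnerProductSpace
open Finset

namespace Stmt9Aux

variable {d M : ℕ}

lemma inner_eq (a b : EuclideanSpace ℝ (Fin d)) : ⟪a, b⟫ = ∑ j, a j * b j := by
  simp [PiLp.inner_apply, RCLike.inner_apply, mul_comm]

noncomputable def Amat (x : Fin M → EuclideanSpace ℝ (Fin d)) (ζ : ℝ) (c : Fin M → ℝ) :
    Matrix (Fin d) (Fin d) ℝ :=
  (∑ i, c i • Matrix.vecMulVec (x i) (x i)) + ζ • (1 : Matrix (Fin d) (Fin d) ℝ)

lemma Amat_mulVec (x : Fin M → EuclideanSpace ℝ (Fin d)) (ζ : ℝ) (c : Fin M → ℝ)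
    (v : Fin d → ℝ) (j : Fin d) :
    (Amat x ζ c).mulVec v j = (∑ i, c i * (x i j * ∑ k, x i k * v k)) + ζ * v j := by
  simp only [Amat, Matrix.mulVec, dotProduct, Matrix.add_apply, Matrix.sum_apply,
    Matrix.smul_apply, Matrix.vecMulVec_apply, Matrix.one_apply, smul_eq_mul,
    mul_ite, mul_one, mul_zero, add_mul, ite_mul, zero_mul, one_mul]
  rw [Finset.sum_add_distrib, Finset.sum_ite_eq Finset.univ j (fun k => ζ * v k)]
  simp only [Finset.mem_univ, if_true]
  congr 1
  simp only [Finset.sum_mul, Finset.mul_sum]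
  rw [Finset.sum_comm]
  exact Finset.sum_congr rfl fun i _ => Finset.sum_congr rfl fun k _ => by ring

lemma sum_smul_apply (x : Fin M → EuclideanSpace ℝ (Fin d)) (c r : Fin M → ℝ) (j : Fin d) :
    (∑ i, c i • r i • x i : EuclideanSpace ℝ (Fin d)) j = ∑ i, c i * (r i * x i j) := by
  induction (Finset.univ : Finset (Fin M)) using Finset.induction with
  | empty => simp
  | insert _ _ h ih => rw [Finset.sum_insert h, Finset.sum_insert h, ← ih]; rfl

lemma Amat_posDef (x : Fin M → EuclideanSpace ℝ (Fin d)) {ζ : ℝ} {c : Fin M → ℝ}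
    (hζ : 0 < ζ) (hc : ∀ i, 0 ≤ c i) : (Amat x ζ c).PosDef := by
  refine Matrix.PosDef.of_dotProduct_mulVec_pos ?_ ?_
  · show (Amat x ζ c).conjTranspose = Amat x ζ c
    ext j k
    simp only [Amat, Matrix.conjTranspose_apply, Matrix.add_apply, Matrix.sum_apply,
      Matrix.smul_apply, Matrix.vecMulVec_apply, Matrix.one_apply, smul_eq_mul, star_trivial]
    rw [show ((if k = j then (1:ℝ) else 0) = if j = k then 1 else 0) by
      by_cases h : j = k <;> simp [h, eq_comm]]
    congr 1
    exact Finset.sum_congr rfl fun i _ => by ring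
  · intro v hv
    have hs : star v = v := by simp
    rw [hs]
    have hdot : dotProduct v ((Amat x ζ c).mulVec v)
        = (∑ i, c i * (∑ k, x i k * v k) ^ 2) + ζ * ∑ j, v j ^ 2 := by
      simp only [dotProduct]
      have : ∀ j, v j * (Amat x ζ c).mulVec v j
          = (∑ i, c i * ((x i j * v j) * ∑ k, x i k * v k)) + ζ * (v j)^2 := by
        intro j
        rw [Amat_mulVec, mul_add, Finset.mul_sum]
        congr 1
        · exact Finset.sum_congr rfl fun i _ => by ring
        · ring
      rw [Finset.sum_congr rfl fun j _ => this j, Finset.sum_add_distrib, ← Finset.mul_sum]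
      congr 1
      rw [Finset.sum_comm]
      refine Finset.sum_congr rfl fun i _ => ?_
      rw [← Finset.mul_sum]
      congr 1
      rw [sq, ← Finset.sum_mul]
    rw [hdot]
    have h1 : 0 ≤ ∑ i, c i * (∑ k, x i k * v k) ^ 2 :=
      Finset.sum_nonneg fun i _ => mul_nonneg (hc i) (sq_nonneg _)
    have h2 : 0 < ∑ j, v j ^ 2 := by
      obtain ⟨j, hj⟩ := Function.ne_iff.1 hv
      exact Finset.sum_pos' (fun k _ => sq_nonneg _)
        ⟨j, Finset.mem_univ j, pow_two_pos_of_ne_zero hj⟩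
    positivity

lemma expand (x : Fin M → EuclideanSpace ℝ (Fin d)) (r : Fin M → ℝ) {ζ : ℝ}
    (c : Fin M → ℝ) (w' v : EuclideanSpace ℝ (Fin d))
    (hstat : ∀ z : EuclideanSpace ℝ (Fin d),
      (∑ i, c i * ((r i - ⟪x i, w'⟫) * ⟪x i, z⟫)) = ζ * ⟪w', z⟫) :
    (∑ i, c i * (r i - ⟪x i, v⟫) ^ 2) + ζ * ‖v‖ ^ 2
      = ((∑ i, c i * (r i - ⟪x i, w'⟫) ^ 2) + ζ * ‖w'‖ ^ 2)
        + ((∑ i, c i * ⟪x i, v - w'⟫ ^ 2) + ζ * ‖v - w'‖ ^ 2) := by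
  have hin : ∀ i : Fin M, ⟪x i, v⟫ = ⟪x i, w'⟫ + ⟪x i, v - w'⟫ := by
    intro i
    rw [← inner_add_right, add_sub_cancel]
  have hnorm : ‖v‖ ^ 2 = ‖w'‖ ^ 2 + 2 * ⟪w', v - w'⟫ + ‖v - w'‖ ^ 2 := by
    have h := norm_add_sq_real w' (v - w')
    rwa [add_sub_cancel] at h
  have hcross := hstat (v - w')
  have h1 : ∑ i, c i * (r i - ⟪x i, v⟫) ^ 2
      = (∑ i, c i * (r i - ⟪x i, w'⟫) ^ 2) - 2 * (ζ * ⟪w', v - w'⟫)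
        + ∑ i, c i * ⟪x i, v - w'⟫ ^ 2 := by
    have hterm : ∀ i : Fin M, c i * (r i - ⟪x i, v⟫) ^ 2
        = c i * (r i - ⟪x i, w'⟫) ^ 2
          - 2 * (c i * ((r i - ⟪x i, w'⟫) * ⟪x i, v - w'⟫))
          + c i * ⟪x i, v - w'⟫ ^ 2 := by
      intro i; rw [hin i]; ring
    rw [Finset.sum_congr rfl fun i _ => hterm i, Finset.sum_add_distrib,
      Finset.sum_sub_distrib, ← Finset.mul_sum, hcross]
  rw [h1, hnorm]; ring

end Stmt9Aux

/-- first assertion of Lemma 2: the squared consecutive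
differences of the reweighted iteration are summable. -/
theorem stmt_9 (d M : ℕ) (hd : 0 < d) (hM : 0 < M)
    (x : Fin M → EuclideanSpace ℝ (Fin d)) (r : Fin M → ℝ)
    (ζ ε : ℝ) (hζ : 0 < ζ) (hε : 0 < ε)
    (w : ℕ → EuclideanSpace ℝ (Fin d)) (u : ℕ → Fin M → ℝ)
    (hu : ∀ t i, u t i = if (r i - ⟪x i, w t⟫) ^ 2 < ε then 1 else 0)
    (hw : ∀ t, w (t + 1) =
      ((∑ i, u t i • Matrix.vecMulVec (x i) (x i)) +
        ζ • (1 : Matrix (Fin d) (Fin d) ℝ))⁻¹.mulVec (∑ i, u t i • r i • x i)) :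
    Summable (fun t : ℕ => ‖w (t + 1) - w t‖ ^ 2) := by
  classical
  open Stmt9Aux in
  -- objective with weights u t, and Lyapunov function J
  set F : ℕ → EuclideanSpace ℝ (Fin d) → ℝ :=
    fun t v => (∑ i, u t i * (r i - ⟪x i, v⟫) ^ 2) + ζ * ‖v‖ ^ 2 with hF
  set J : EuclideanSpace ℝ (Fin d) → ℝ :=
    fun v => (∑ i, min ((r i - ⟪x i, v⟫) ^ 2) ε) + ζ * ‖v‖ ^ 2 with hJ
  have hc01 : ∀ t i, u t i = 0 ∨ u t i = 1 := by
    intro t i; rw [hu t i]; split_ifs <;> simp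
  have hcnn : ∀ t i, 0 ≤ u t i := by
    intro t i; rcases hc01 t i with h | h <;> rw [h] <;> norm_num
  have hJnn : ∀ v, 0 ≤ J v := by
    intro v
    refine add_nonneg (Finset.sum_nonneg fun i _ => le_min (sq_nonneg _) hε.le) ?_
    positivity
  -- key descent inequality
  have hdesc : ∀ t, ζ * ‖w (t + 1) - w t‖ ^ 2 ≤ J (w t) - J (w (t + 1)) := by
    intro t
    -- stationarity of w (t+1)
    have hAw : (Amat x ζ (u t)).mulVec (w (t + 1)) = ∑ i, u t i • r i • x i := by
      rw [hw t]
      have hpd := Amat_posDef x hζ (hcnn t)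
      have hdet : IsUnit (Amat x ζ (u t)).det :=
        isUnit_iff_ne_zero.2 (ne_of_gt hpd.det_pos)
      show (Amat x ζ (u t)).mulVec ((Amat x ζ (u t))⁻¹.mulVec _) = _
      rw [Matrix.mulVec_mulVec, Matrix.mul_nonsing_inv _ hdet, Matrix.one_mulVec]
      simp
    have hcoord : ∀ j, (∑ i, u t i * ((r i - ⟪x i, w (t + 1)⟫) * x i j))
        = ζ * w (t + 1) j := by
      intro j
      have h := congrFun hAw j
      rw [Amat_mulVec, sum_smul_apply] at h
      have hp : ∀ i : Fin M, ⟪x i, w (t + 1)⟫ = ∑ k, x i k * w (t + 1) k :=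
        fun i => inner_eq (x i) (w (t + 1))
      have h2 : ∑ i, u t i * ((r i - ⟪x i, w (t + 1)⟫) * x i j)
          = (∑ i, u t i * (r i * x i j))
            - ∑ i, u t i * (x i j * ∑ k, x i k * w (t + 1) k) := by
        rw [← Finset.sum_sub_distrib]
        exact Finset.sum_congr rfl fun i _ => by rw [hp i]; ring
      rw [h2]; linarith [h]
    have hstat : ∀ z : EuclideanSpace ℝ (Fin d),
        (∑ i, u t i * ((r i - ⟪x i, w (t + 1)⟫) * ⟪x i, z⟫)) = ζ * ⟪w (t + 1), z⟫ := by
      intro z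
      have h1 : ∑ i, u t i * ((r i - ⟪x i, w (t + 1)⟫) * ⟪x i, z⟫)
          = ∑ j, (∑ i, u t i * ((r i - ⟪x i, w (t + 1)⟫) * x i j)) * z j := by
        simp only [Finset.sum_mul]
        rw [Finset.sum_comm]
        refine Finset.sum_congr rfl fun i _ => ?_
        rw [inner_eq (x i) z, Finset.mul_sum, Finset.mul_sum]
        exact Finset.sum_congr rfl fun j _ => by ring
      rw [h1, Finset.sum_congr rfl fun j _ => by rw [hcoord j], inner_eq (w (t + 1)) z,
        Finset.mul_sum]
      exact Finset.sum_congr rfl fun j _ => by ring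
    -- quadratic expansion at the minimizer
    have hexp := expand x r (u t) (w (t + 1)) (w t) hstat
    have hFdrop : F t (w (t + 1)) + ζ * ‖w (t + 1) - w t‖ ^ 2 ≤ F t (w t) := by
      have hq : 0 ≤ ∑ i, u t i * ⟪x i, w t - w (t + 1)⟫ ^ 2 :=
        Finset.sum_nonneg fun i _ => mul_nonneg (hcnn t i) (sq_nonneg _)
      have hnrev : ‖w t - w (t + 1)‖ = ‖w (t + 1) - w t‖ := norm_sub_rev _ _
      simp only [hF]
      rw [← hnrev]
      nlinarith [hexp]
    -- relate J and F
    have hJeq : J (w t) = F t (w t) + ∑ i, (1 - u t i) * ε := by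
      simp only [hJ, hF]
      rw [add_right_comm]
      congr 1
      rw [← Finset.sum_add_distrib]
      refine Finset.sum_congr rfl fun i _ => ?_
      rw [hu t i]
      by_cases h : (r i - ⟪x i, w t⟫) ^ 2 < ε
      · rw [if_pos h, min_eq_left h.le]; ring
      · rw [if_neg h, min_eq_right (not_lt.1 h)]; ring
    have hJle : J (w (t + 1)) ≤ F t (w (t + 1)) + ∑ i, (1 - u t i) * ε := by
      simp only [hJ, hF]
      rw [add_right_comm]
      refine add_le_add_left ?_ _
      rw [← Finset.sum_add_distrib]
      refine Finset.sum_le_sum fun i _ => ?_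
      rcases hc01 t i with h | h
      · rw [h]
        have := min_le_right ((r i - ⟪x i, w (t + 1)⟫) ^ 2) ε
        linarith
      · rw [h]
        have := min_le_left ((r i - ⟪x i, w (t + 1)⟫) ^ 2) ε
        linarith
    linarith
  -- summability from telescoping bound
  refine summable_of_sum_range_le (c := J (w 0) / ζ) (fun n => sq_nonneg _) fun n => ?_
  rw [le_div_iff₀ hζ]
  have htel : ∑ t ∈ Finset.range n, (J (w t) - J (w (t + 1))) = J (w 0) - J (w n) :=
    Finset.sum_range_sub' (fun t => J (w t)) n
  calc (∑ t ∈ Finset.range n, ‖w (t + 1) - w t‖ ^ 2) * ζ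
      = ∑ t ∈ Finset.range n, ζ * ‖w (t + 1) - w t‖ ^ 2 := by
        rw [Finset.sum_mul]; exact Finset.sum_congr rfl fun t _ => by ring
    _ ≤ ∑ t ∈ Finset.range n, (J (w t) - J (w (t + 1))) :=
        Finset.sum_le_sum fun t _ => hdesc t
    _ = J (w 0) - J (w n) := htel
    _ ≤ J (w 0) := by linarith [hJnn (w n)]
end

section
/- Let d, M be positive integers, x_1, …, x_M ∈ ℝ^d, r_1, …, r_M ∈ ℝ, ζ > 0, ε > 0. Define u*(w)_i = 1 if (r_i − ⟨x_i, w⟩)² < ε, else 0. Let w⁽⁰⁾ ∈ ℝ^d and for t ≥ 0 set u⁽ᵗ⁾ = u*(w⁽ᵗ⁾) and w⁽ᵗ⁺¹⁾ = (Σ_{i=1}^M u_i⁽ᵗ⁾ x_i x_iᵀ + ζ I)⁻¹ (Σ_{i=1}^M u_i⁽ᵗ⁾ r_i x_i). Then ‖w⁽ᵗ⁾ − w⁽ᵗ⁻¹⁾‖² → 0 as t → ∞, i.e., the sequence of consecutive differences w⁽ᵗ⁾ − w⁽ᵗ⁻¹⁾ tends to 0. -/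
open scoped RealInnerProductSpace
open Matrix Finset

namespace Stmt10Aux

variable {d M : ℕ}

lemma sum_mulVec' (s : Finset (Fin M)) (A : Fin M → Matrix (Fin d) (Fin d) ℝ) (v : Fin d → ℝ) :
    (∑ i ∈ s, A i) *ᵥ v = ∑ i ∈ s, A i *ᵥ v := by
  ext j
  simp only [Matrix.mulVec, dotProduct, Finset.sum_apply, Matrix.sum_apply, Finset.sum_mul]
  rw [Finset.sum_comm]

lemma vecMulVec_mulVec' (a b v : Fin d → ℝ) :
    (vecMulVec a b) *ᵥ v = (b ⬝ᵥ v) • a := by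
  ext j
  simp only [Matrix.mulVec, dotProduct, vecMulVec_apply, Pi.smul_apply, smul_eq_mul,
    Finset.sum_mul]
  exact Finset.sum_congr rfl fun k _ => by ring

lemma dot_sum' (s : Finset (Fin M)) (v : Fin d → ℝ) (f : Fin M → (Fin d → ℝ)) :
    v ⬝ᵥ (∑ i ∈ s, f i) = ∑ i ∈ s, v ⬝ᵥ f i := by
  simp only [dotProduct, Finset.sum_apply, Finset.mul_sum]
  rw [Finset.sum_comm]

lemma sum_dot' (s : Finset (Fin M)) (v : Fin d → ℝ) (f : Fin M → (Fin d → ℝ)) :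
    (∑ i ∈ s, f i) ⬝ᵥ v = ∑ i ∈ s, f i ⬝ᵥ v := by
  rw [dotProduct_comm, dot_sum']
  exact Finset.sum_congr rfl fun i _ => dotProduct_comm _ _

variable (x : Fin M → (Fin d → ℝ)) (ζ : ℝ) (u : Fin M → ℝ)

noncomputable def P : Matrix (Fin d) (Fin d) ℝ :=
  (∑ i, u i • vecMulVec (x i) (x i)) + ζ • 1

lemma P_mulVec (v : Fin d → ℝ) :
    P x ζ u *ᵥ v = (∑ i, (u i * (x i ⬝ᵥ v)) • x i) + ζ • v := by
  rw [P, add_mulVec, sum_mulVec', smul_mulVec, one_mulVec]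
  congr 1
  refine Finset.sum_congr rfl fun i _ => ?_
  rw [smul_mulVec, vecMulVec_mulVec', smul_smul]

def S (v w₀ : Fin d → ℝ) : ℝ := (∑ i, u i * (x i ⬝ᵥ v) * (x i ⬝ᵥ w₀)) + ζ * (v ⬝ᵥ w₀)

lemma dot_P (v w₀ : Fin d → ℝ) : v ⬝ᵥ (P x ζ u *ᵥ w₀) = S x ζ u v w₀ := by
  rw [P_mulVec, dotProduct_add, dot_sum', dotProduct_smul, smul_eq_mul, S]
  congr 1
  refine Finset.sum_congr rfl fun i _ => ?_
  rw [dotProduct_smul, smul_eq_mul, dotProduct_comm v (x i)]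
  ring

lemma S_symm (v w₀ : Fin d → ℝ) : S x ζ u v w₀ = S x ζ u w₀ v := by
  rw [S, S, dotProduct_comm]
  congr 1
  exact Finset.sum_congr rfl fun i _ => by ring

lemma S_sub_left (a b c : Fin d → ℝ) :
    S x ζ u (a - b) c = S x ζ u a c - S x ζ u b c := by
  simp only [S, dotProduct_sub, sub_dotProduct, mul_sub, sub_mul]
  rw [Finset.sum_sub_distrib]
  ring

lemma S_sub_expand (a c : Fin d → ℝ) :
    S x ζ u (a - c) (a - c) = S x ζ u a a - 2 * S x ζ u c a + S x ζ u c c := by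
  rw [S_sub_left, S_symm x ζ u a (a - c), S_symm x ζ u c (a - c),
    S_sub_left, S_sub_left, S_symm x ζ u a c]
  ring

lemma S_lower (hu : ∀ i, 0 ≤ u i) (h : Fin d → ℝ) :
    ζ * (h ⬝ᵥ h) ≤ S x ζ u h h := by
  have : (0:ℝ) ≤ ∑ i, u i * (x i ⬝ᵥ h) * (x i ⬝ᵥ h) :=
    Finset.sum_nonneg fun i _ => by
      rw [mul_assoc]; exact mul_nonneg (hu i) (mul_self_nonneg _)
  rw [S]; linarith

lemma P_posdef (hu : ∀ i, 0 ≤ u i) (hζ : 0 < ζ) : (P x ζ u).PosDef := by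
  rw [posDef_iff_dotProduct_mulVec]
  constructor
  · show (P x ζ u)ᴴ = P x ζ u
    ext i j
    simp only [P, conjTranspose_apply, Matrix.add_apply, Matrix.sum_apply, Matrix.smul_apply,
      vecMulVec_apply, Matrix.one_apply, star_trivial, smul_eq_mul]
    congr 1
    · exact Finset.sum_congr rfl fun k _ => by ring
    · simp [eq_comm]
  · intro v hv
    have hvv : 0 < v ⬝ᵥ v := by
      have h0 : 0 ≤ v ⬝ᵥ v := Finset.sum_nonneg fun i _ => mul_self_nonneg _
      rcases h0.lt_or_eq with h | h
      · exact h
      · exfalso; apply hv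
        ext j
        have := Finset.sum_eq_zero_iff_of_nonneg
          (fun i (_ : i ∈ Finset.univ) => mul_self_nonneg (v i)) |>.mp h.symm j (Finset.mem_univ j)
        simpa [mul_self_eq_zero] using this
    have : star v ⬝ᵥ (P x ζ u *ᵥ v) = S x ζ u v v := by
      rw [star_trivial, dot_P]
    rw [this]
    calc (0:ℝ) < ζ * (v ⬝ᵥ v) := by positivity
    _ ≤ S x ζ u v v := S_lower x ζ u hu v

lemma P_solves (hu : ∀ i, 0 ≤ u i) (hζ : 0 < ζ) (b : Fin d → ℝ) :
    P x ζ u *ᵥ ((P x ζ u)⁻¹ *ᵥ b) = b := by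
  have hdet : IsUnit (P x ζ u).det :=
    isUnit_iff_ne_zero.mpr (ne_of_gt (P_posdef x ζ u hu hζ).det_pos)
  rw [mulVec_mulVec, mul_nonsing_inv _ hdet, one_mulVec]

lemma g_key (r : Fin M → ℝ) (hu : ∀ i, 0 ≤ u i) (hζ : 0 < ζ) (v wstar : Fin d → ℝ)
    (hws : wstar = (P x ζ u)⁻¹ *ᵥ (∑ i, u i • r i • x i)) :
    ((∑ i, u i * (r i - x i ⬝ᵥ wstar)^2) + ζ * (wstar ⬝ᵥ wstar))
      + S x ζ u (v - wstar) (v - wstar)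
      = (∑ i, u i * (r i - x i ⬝ᵥ v)^2) + ζ * (v ⬝ᵥ v) := by
  set b : Fin d → ℝ := ∑ i, u i • r i • x i with hb
  have hsol : P x ζ u *ᵥ wstar = b := by rw [hws]; exact P_solves x ζ u hu hζ b
  have hbS : ∀ a, b ⬝ᵥ a = S x ζ u wstar a := by
    intro a
    rw [← hsol, dotProduct_comm, dot_P, S_symm]
  have hbv : ∀ a : Fin d → ℝ, b ⬝ᵥ a = ∑ i, u i * r i * (x i ⬝ᵥ a) := by
    intro a
    rw [hb, sum_dot']
    exact Finset.sum_congr rfl fun i _ => by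
      rw [smul_dotProduct, smul_dotProduct, smul_eq_mul, smul_eq_mul, mul_assoc]
  have gexp : ∀ a : Fin d → ℝ,
      (∑ i, u i * (r i - x i ⬝ᵥ a)^2) + ζ * (a ⬝ᵥ a)
        = (∑ i, u i * (r i)^2) - 2 * (b ⬝ᵥ a) + S x ζ u a a := by
    intro a
    have hterm : ∀ i : Fin M, u i * (r i - x i ⬝ᵥ a)^2
        = u i * (r i)^2 - 2 * (u i * r i * (x i ⬝ᵥ a)) + u i * (x i ⬝ᵥ a) * (x i ⬝ᵥ a) :=
      fun i => by ring
    rw [hbv, S]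
    simp only [hterm]
    rw [Finset.sum_add_distrib, Finset.sum_sub_distrib, ← Finset.mul_sum]
    ring
  have e1 := gexp v
  have e2 := gexp wstar
  have e3 := S_sub_expand x ζ u v wstar
  have e4 := hbS v
  have e5 := hbS wstar
  have e6 : S x ζ u wstar wstar = S x ζ u wstar wstar := rfl
  have e7 := S_symm x ζ u wstar v
  linarith

end Stmt10Aux

/-- second assertion of Lemma 2: the squared consecutive
differences of the reweighted iteration tend to 0. -/
theorem stmt_10 (d M : ℕ) (hd : 0 < d) (hM : 0 < M)
    (x : Fin M → EuclideanSpace ℝ (Fin d)) (r : Fin M → ℝ)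
    (ζ ε : ℝ) (hζ : 0 < ζ) (hε : 0 < ε)
    (w : ℕ → EuclideanSpace ℝ (Fin d)) (u : ℕ → Fin M → ℝ)
    (hu : ∀ t i, u t i = if (r i - ⟪x i, w t⟫) ^ 2 < ε then 1 else 0)
    (hw : ∀ t, w (t + 1) =
      ((∑ i, u t i • Matrix.vecMulVec (x i) (x i)) +
        ζ • (1 : Matrix (Fin d) (Fin d) ℝ))⁻¹.mulVec (∑ i, u t i • r i • x i)) :
    Filter.Tendsto (fun t : ℕ => ‖w (t + 1) - w t‖ ^ 2) Filter.atTop (nhds 0) := by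
  classical
  set X : Fin M → (Fin d → ℝ) := fun i => x i with hX
  set W : ℕ → (Fin d → ℝ) := fun t => w t with hW
  -- inner product = dot product
  have hinner : ∀ a b : EuclideanSpace ℝ (Fin d), ⟪a, b⟫ = (a : Fin d → ℝ) ⬝ᵥ (b : Fin d → ℝ) := by
    intro a b
    simp [PiLp.inner_apply, RCLike.inner_apply, starRingEnd_apply, dotProduct]
    exact Finset.sum_congr rfl fun _ _ => mul_comm _ _
  have hnorm : ∀ a : EuclideanSpace ℝ (Fin d),
      ‖a‖ ^ 2 = (a : Fin d → ℝ) ⬝ᵥ (a : Fin d → ℝ) := by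
    intro a
    rw [← real_inner_self_eq_norm_sq, hinner]
  -- u values
  have hu01 : ∀ t i, u t i = 0 ∨ u t i = 1 := by
    intro t i
    rw [hu t i]
    split <;> simp
  have hu0 : ∀ t i, 0 ≤ u t i := by
    intro t i; rcases hu01 t i with h | h <;> rw [h] <;> norm_num
  have hu1 : ∀ t i, u t i ≤ 1 := by
    intro t i; rcases hu01 t i with h | h <;> rw [h] <;> norm_num
  -- iteration in Pi-language
  have hwP : ∀ t, W (t + 1) =
      (Stmt10Aux.P X ζ (u t))⁻¹ *ᵥ (∑ i, u t i • r i • X i) := fun t => hw t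
  -- the objective
  set F : ℕ → ℝ := fun t =>
    (∑ i, (u t i * (r i - X i ⬝ᵥ W t) ^ 2 + ε * (1 - u t i))) + ζ * (W t ⬝ᵥ W t) with hF
  have hF0 : ∀ t, 0 ≤ F t := by
    intro t
    have h1 : 0 ≤ ∑ i, (u t i * (r i - X i ⬝ᵥ W t) ^ 2 + ε * (1 - u t i)) :=
      Finset.sum_nonneg fun i _ => add_nonneg
        (mul_nonneg (hu0 t i) (sq_nonneg _))
        (mul_nonneg hε.le (by linarith [hu1 t i]))
    have h2 : 0 ≤ W t ⬝ᵥ W t := Finset.sum_nonneg fun j _ => mul_self_nonneg _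
    have h3 : 0 ≤ ζ * (W t ⬝ᵥ W t) := mul_nonneg hζ.le h2
    simp only [hF]
    linarith
  -- descent
  have hdesc : ∀ t, F (t + 1) + ζ * ‖w (t + 1) - w t‖ ^ 2 ≤ F t := by
    intro t
    have hkey := Stmt10Aux.g_key X ζ (u t) r (hu0 t) hζ (W t) (W (t + 1)) (hwP t)
    have hlow : ζ * ((W t - W (t + 1)) ⬝ᵥ (W t - W (t + 1)))
        ≤ Stmt10Aux.S X ζ (u t) (W t - W (t + 1)) (W t - W (t + 1)) :=
      Stmt10Aux.S_lower X ζ (u t) (hu0 t) _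
    have hnn : ‖w (t + 1) - w t‖ ^ 2 = (W t - W (t + 1)) ⬝ᵥ (W t - W (t + 1)) := by
      rw [← norm_sub_rev, hnorm (w t - w (t + 1)), WithLp.ofLp_sub]
    -- step 1: minimizing over w with weights u t
    have step1 : (∑ i, u t i * (r i - X i ⬝ᵥ W (t + 1)) ^ 2) + ζ * (W (t + 1) ⬝ᵥ W (t + 1))
        + ζ * ‖w (t + 1) - w t‖ ^ 2
        ≤ (∑ i, u t i * (r i - X i ⬝ᵥ W t) ^ 2) + ζ * (W t ⬝ᵥ W t) := by
      rw [hnn]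
      linarith
    -- step 2: minimizing over u at w (t+1)
    have step2 : ∀ i, u (t + 1) i * (r i - X i ⬝ᵥ W (t + 1)) ^ 2 + ε * (1 - u (t + 1) i)
        ≤ u t i * (r i - X i ⬝ᵥ W (t + 1)) ^ 2 + ε * (1 - u t i) := by
      intro i
      have hs : (r i - ⟪x i, w (t + 1)⟫) ^ 2 = (r i - X i ⬝ᵥ W (t + 1)) ^ 2 := by
        rw [hinner]
      set s : ℝ := (r i - X i ⬝ᵥ W (t + 1)) ^ 2 with hsdef
      have hs0 : 0 ≤ s := sq_nonneg _
      have hun : u (t + 1) i = if s < ε then 1 else 0 := by rw [hu (t + 1) i, hs]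
      rcases hu01 t i with h | h <;> rw [h, hun] <;> split <;> rename_i hc <;>
        simp only [one_mul, zero_mul, mul_one, mul_zero, sub_zero, sub_self] <;> linarith
    have step2' : (∑ i, (u (t + 1) i * (r i - X i ⬝ᵥ W (t + 1)) ^ 2 + ε * (1 - u (t + 1) i)))
        ≤ (∑ i, (u t i * (r i - X i ⬝ᵥ W (t + 1)) ^ 2 + ε * (1 - u t i))) :=
      Finset.sum_le_sum fun i _ => step2 i
    have hsplit : ∀ (v : Fin M → ℝ) (a : Fin d → ℝ),
        (∑ i, (v i * (r i - X i ⬝ᵥ a) ^ 2 + ε * (1 - v i)))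
        = (∑ i, v i * (r i - X i ⬝ᵥ a) ^ 2) + ∑ i, ε * (1 - v i) :=
      fun v a => Finset.sum_add_distrib
    simp only [hF]
    rw [hsplit, hsplit]
    have := step2'
    rw [hsplit, hsplit] at this
    linarith
  -- F is antitone
  have hmono : Antitone F := antitone_nat_of_succ_le fun t => by
    have h1 := hdesc t
    have h2 : 0 ≤ ζ * ‖w (t + 1) - w t‖ ^ 2 := mul_nonneg hζ.le (sq_nonneg _)
    linarith
  have hbdd : BddBelow (Set.range F) := by
    refine ⟨0, ?_⟩
    rintro y ⟨t, rfl⟩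
    exact hF0 t
  have hconv := tendsto_atTop_ciInf hmono hbdd
  have hconv' : Filter.Tendsto (fun t => F (t + 1)) Filter.atTop (nhds (⨅ i, F i)) :=
    hconv.comp (Filter.tendsto_add_atTop_nat 1)
  have hdiff : Filter.Tendsto (fun t => F t - F (t + 1)) Filter.atTop (nhds 0) := by
    have := hconv.sub hconv'
    simpa using this
  have hdiv : Filter.Tendsto (fun t => (F t - F (t + 1)) / ζ) Filter.atTop (nhds 0) := by
    simpa using hdiff.div_const ζ
  refine squeeze_zero (fun t => sq_nonneg _) (fun t => ?_) hdiv
  have := hdesc t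
  rw [le_div_iff₀ hζ]
  linarith [mul_comm ζ (‖w (t + 1) - w t‖ ^ 2)]
end

section
/- Let d, M be positive integers, x_1, …, x_M ∈ ℝ^d, r_1, …, r_M ∈ ℝ, ζ > 0, ε > 0. Define u*(w)_i = 1 if (r_i − ⟨x_i, w⟩)² < ε, else 0. Let w⁽⁰⁾ ∈ ℝ^d and for t ≥ 0 set u⁽ᵗ⁾ = u*(w⁽ᵗ⁾) and w⁽ᵗ⁺¹⁾ = (Σ_{i=1}^M u_i⁽ᵗ⁾ x_i x_iᵀ + ζ I)⁻¹ (Σ_{i=1}^M u_i⁽ᵗ⁾ r_i x_i). Then the iteration converges after a finite number of iterations: there exists T ∈ ℕ such that for all t ≥ T, w⁽ᵗ⁾ = w⁽ᵀ⁾ and u⁽ᵗ⁾ = u⁽ᵀ⁾. -/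
open scoped RealInnerProductSpace

open Matrix in
private lemma stmt11_sum_mulVec {d M : ℕ} (B : Fin M → Matrix (Fin d) (Fin d) ℝ)
    (v : Fin d → ℝ) : (∑ i, B i) *ᵥ v = ∑ i, (B i *ᵥ v) := by
  ext j
  simp only [Matrix.mulVec, dotProduct, Matrix.sum_apply, Finset.sum_mul,
    Finset.sum_apply]
  exact Finset.sum_comm

open Matrix in
private lemma stmt11_dot_sum {d M : ℕ} (g : Fin M → Fin d → ℝ) (z : Fin d → ℝ) :
    z ⬝ᵥ (∑ i, g i) = ∑ i, z ⬝ᵥ g i := by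
  simp only [dotProduct, Finset.sum_apply, Finset.mul_sum]
  exact Finset.sum_comm

open Matrix in
private lemma stmt11_mulVec {d M : ℕ} (x : Fin M → Fin d → ℝ) (ζ : ℝ) (a : Fin M → ℝ)
    (v z : Fin d → ℝ) :
    z ⬝ᵥ (((∑ i, a i • Matrix.vecMulVec (x i) (x i)) + ζ • (1 : Matrix (Fin d) (Fin d) ℝ)) *ᵥ v)
      = (∑ i, a i * ((x i ⬝ᵥ v) * (x i ⬝ᵥ z))) + ζ * (z ⬝ᵥ v) := by
  have hvv : ∀ i, (a i • Matrix.vecMulVec (x i) (x i)) *ᵥ v = (a i * (x i ⬝ᵥ v)) • x i := by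
    intro i
    ext j
    simp only [Matrix.mulVec, dotProduct, Matrix.smul_apply, Matrix.vecMulVec_apply,
      smul_eq_mul, Pi.smul_apply, Finset.mul_sum, Finset.sum_mul]
    refine Finset.sum_congr rfl fun k _ => by ring
  rw [Matrix.add_mulVec, dotProduct_add, stmt11_sum_mulVec, Matrix.smul_mulVec,
    Matrix.one_mulVec, stmt11_dot_sum]
  congr 1
  · refine Finset.sum_congr rfl fun i _ => ?_
    rw [hvv i, dotProduct_smul, smul_eq_mul, dotProduct_comm z (x i)]
    ring
  · rw [dotProduct_smul, smul_eq_mul]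

open Matrix in
private lemma stmt11_posdef {d M : ℕ} (x : Fin M → Fin d → ℝ) {ζ : ℝ} (hζ : 0 < ζ)
    {a : Fin M → ℝ} (ha : ∀ i, 0 ≤ a i) :
    ((∑ i, a i • Matrix.vecMulVec (x i) (x i)) + ζ • (1 : Matrix (Fin d) (Fin d) ℝ)).PosDef := by
  refine Matrix.posDef_iff_dotProduct_mulVec.mpr ⟨?_, ?_⟩
  · unfold Matrix.IsHermitian
    ext j k
    simp only [Matrix.conjTranspose_apply, star_trivial, Matrix.add_apply, Matrix.sum_apply,
      Matrix.smul_apply, Matrix.vecMulVec_apply, Matrix.one_apply, smul_eq_mul]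
    congr 1
    · exact Finset.sum_congr rfl fun i _ => by ring
    · rcases eq_or_ne j k with h | h
      · simp [h]
      · simp [h, Ne.symm h]
  · intro z hz
    have hsz : star z = z := by funext j; simp
    rw [hsz, stmt11_mulVec]
    have h1 : 0 ≤ ∑ i, a i * ((x i ⬝ᵥ z) * (x i ⬝ᵥ z)) :=
      Finset.sum_nonneg fun i _ => mul_nonneg (ha i) (mul_self_nonneg _)
    have h0 : 0 ≤ z ⬝ᵥ z := Finset.sum_nonneg fun j _ => mul_self_nonneg _
    have h2 : 0 < z ⬝ᵥ z :=
      h0.lt_of_ne (fun h => hz (dotProduct_self_eq_zero.mp h.symm))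
    have := mul_pos hζ h2
    linarith

open Matrix in
private lemma stmt11_expand {d M : ℕ} (x : Fin M → Fin d → ℝ) (r : Fin M → ℝ) (ζ : ℝ)
    (a : Fin M → ℝ) (w' v : Fin d → ℝ)
    (hne : (∑ i, a i * ((x i ⬝ᵥ w') * (x i ⬝ᵥ (v - w')))) + ζ * ((v - w') ⬝ᵥ w')
          = ∑ i, a i * (r i * (x i ⬝ᵥ (v - w')))) :
    (∑ i, a i * (r i - x i ⬝ᵥ v) ^ 2) + ζ * (v ⬝ᵥ v)
      = ((∑ i, a i * (r i - x i ⬝ᵥ w') ^ 2) + ζ * (w' ⬝ᵥ w'))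
        + ((∑ i, a i * (x i ⬝ᵥ (v - w')) ^ 2) + ζ * ((v - w') ⬝ᵥ (v - w'))) := by
  obtain ⟨z, rfl⟩ : ∃ z, v = w' + z := ⟨v - w', by abel⟩
  have hz : w' + z - w' = z := by abel
  rw [hz] at hne ⊢
  have hdv : ∀ i, x i ⬝ᵥ (w' + z) = x i ⬝ᵥ w' + x i ⬝ᵥ z := fun i => dotProduct_add _ _ _
  have hvv : (w' + z) ⬝ᵥ (w' + z) = w' ⬝ᵥ w' + 2 * (z ⬝ᵥ w') + z ⬝ᵥ z := by
    rw [dotProduct_add, add_dotProduct, add_dotProduct,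
      dotProduct_comm w' z]
    ring
  have h1 : ∑ i, a i * (r i - x i ⬝ᵥ (w' + z)) ^ 2
      = (∑ i, a i * (r i - x i ⬝ᵥ w') ^ 2) + (∑ i, a i * (x i ⬝ᵥ z) ^ 2)
        - 2 * (∑ i, a i * (r i * (x i ⬝ᵥ z)))
        + 2 * (∑ i, a i * ((x i ⬝ᵥ w') * (x i ⬝ᵥ z))) := by
    rw [Finset.mul_sum, Finset.mul_sum, ← Finset.sum_add_distrib, ← Finset.sum_sub_distrib,
      ← Finset.sum_add_distrib]
    refine Finset.sum_congr rfl fun i _ => ?_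
    rw [hdv i]; ring
  rw [h1, hvv]
  linarith [hne]

/-- Theorem 1 of the paper: the reweighted iteration converges
after a finite number of iterations. -/
theorem stmt_11 (d M : ℕ) (hd : 0 < d) (hM : 0 < M)
    (x : Fin M → EuclideanSpace ℝ (Fin d)) (r : Fin M → ℝ)
    (ζ ε : ℝ) (hζ : 0 < ζ) (hε : 0 < ε)
    (w : ℕ → EuclideanSpace ℝ (Fin d)) (u : ℕ → Fin M → ℝ)
    (hu : ∀ t i, u t i = if (r i - ⟪x i, w t⟫) ^ 2 < ε then 1 else 0)
    (hw : ∀ t, w (t + 1) =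
      ((∑ i, u t i • Matrix.vecMulVec (x i) (x i)) +
        ζ • (1 : Matrix (Fin d) (Fin d) ℝ))⁻¹.mulVec (∑ i, u t i • r i • x i)) :
    ∃ T : ℕ, ∀ t : ℕ, T ≤ t → w t = w T ∧ u t = u T := by
  classical
  have hinner : ∀ (p q : EuclideanSpace ℝ (Fin d)),
      ⟪p, q⟫ = dotProduct (p : Fin d → ℝ) (q : Fin d → ℝ) := fun p q => by
    simp [PiLp.inner_apply, RCLike.inner_apply, dotProduct, mul_comm]
  have hu' : ∀ t i,
      u t i = if (r i - dotProduct (x i : Fin d → ℝ) (w t : Fin d → ℝ)) ^ 2 < ε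
        then 1 else 0 := by
    intro t i
    rw [hu t i, hinner]
  have h01 : ∀ t i, u t i = 0 ∨ u t i = 1 := by
    intro t i
    rw [hu' t i]
    split <;> simp
  have hnn : ∀ t i, (0 : ℝ) ≤ u t i := by
    intro t i
    rcases h01 t i with h | h <;> rw [h] <;> norm_num
  -- the objective function
  set g : (Fin M → ℝ) → (Fin d → ℝ) → ℝ := fun a v =>
    ((∑ i, a i * (r i - dotProduct (x i : Fin d → ℝ) v) ^ 2)
      + ζ * dotProduct v v) + ε * ∑ i, (1 - a i) with hg
  -- the normal equations
  have key : ∀ t, ((∑ i, u t i • Matrix.vecMulVec (x i) (x i)) +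
      ζ • (1 : Matrix (Fin d) (Fin d) ℝ)).mulVec (w (t + 1) : Fin d → ℝ)
        = (∑ i, u t i • r i • (x i : Fin d → ℝ)) := by
    intro t
    have hpd := stmt11_posdef (fun i => (x i : Fin d → ℝ)) hζ (hnn t)
    rw [hw t, Matrix.mulVec_mulVec, Matrix.mul_nonsing_inv _ hpd.det_pos.ne'.isUnit,
      Matrix.one_mulVec]
  have hne : ∀ t (z : Fin d → ℝ),
      (∑ i, u t i * (dotProduct (x i : Fin d → ℝ) (w (t + 1)) *
          dotProduct (x i : Fin d → ℝ) z)) + ζ * dotProduct z (w (t + 1))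
        = ∑ i, u t i * (r i * dotProduct (x i : Fin d → ℝ) z) := by
    intro t z
    have h1 := stmt11_mulVec (fun i => (x i : Fin d → ℝ)) ζ (u t) (w (t + 1)) z
    rw [key t] at h1
    rw [← h1, stmt11_dot_sum]
    refine Finset.sum_congr rfl fun i _ => ?_
    rw [dotProduct_smul, dotProduct_smul, smul_eq_mul, smul_eq_mul,
      dotProduct_comm z (x i)]
  -- quadratic expansion of the objective around the minimizer
  have hexp : ∀ t (v : Fin d → ℝ), g (u t) v
      = g (u t) (w (t + 1)) +
        ((∑ i, u t i * (dotProduct (x i : Fin d → ℝ) (v - (show Fin d → ℝ from w (t + 1)))) ^ 2)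
          + ζ * dotProduct (v - (show Fin d → ℝ from w (t + 1))) (v - (show Fin d → ℝ from w (t + 1)))) := by
    intro t v
    have h := stmt11_expand (fun i => (x i : Fin d → ℝ)) r ζ (u t) (w (t + 1)) v
      (hne t (v - (show Fin d → ℝ from w (t + 1))))
    simp only [hg]
    linarith [h]
  -- choosing the weights greedily decreases the objective
  have hdec : ∀ t, g (u (t + 1)) (w (t + 1)) ≤ g (u t) (w (t + 1)) := by
    intro t
    have hterm : ∀ i ∈ Finset.univ, u (t + 1) i *
          (r i - dotProduct (x i : Fin d → ℝ) (w (t + 1))) ^ 2 + ε * (1 - u (t + 1) i)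
        ≤ u t i * (r i - dotProduct (x i : Fin d → ℝ) (w (t + 1))) ^ 2
          + ε * (1 - u t i) := by
      intro i _
      rw [hu' (t + 1) i]
      split_ifs with hq
      · rcases h01 t i with h | h <;> rw [h] <;> simp <;> linarith
      · push_neg at hq
        rcases h01 t i with h | h <;> rw [h] <;> simp <;> linarith
    have hsum := Finset.sum_le_sum hterm
    rw [Finset.sum_add_distrib, Finset.sum_add_distrib] at hsum
    have he1 : ε * ∑ i, (1 - u (t + 1) i) = ∑ i, ε * (1 - u (t + 1) i) := Finset.mul_sum _ _ _
    have he2 : ε * ∑ i, (1 - u t i) = ∑ i, ε * (1 - u t i) := Finset.mul_sum _ _ _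
    simp only [hg]
    linarith [hsum]
  -- the objective is nonincreasing, strictly when w moves
  have hQ : ∀ t (v : Fin d → ℝ),
      0 ≤ (∑ i, u t i * (dotProduct (x i : Fin d → ℝ) (v - (show Fin d → ℝ from w (t + 1)))) ^ 2)
        + ζ * dotProduct (v - (show Fin d → ℝ from w (t + 1))) (v - (show Fin d → ℝ from w (t + 1))) := by
    intro t v
    have h1 : 0 ≤ ∑ i, u t i * (dotProduct (x i : Fin d → ℝ) (v - (show Fin d → ℝ from w (t + 1)))) ^ 2 :=
      Finset.sum_nonneg fun i _ => mul_nonneg (hnn t i) (sq_nonneg _)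
    have h2 : 0 ≤ dotProduct (v - (show Fin d → ℝ from w (t + 1))) (v - (show Fin d → ℝ from w (t + 1))) :=
      Finset.sum_nonneg fun j _ => mul_self_nonneg _
    nlinarith
  have hmono : ∀ t, g (u (t + 1)) (w (t + 1)) ≤ g (u t) (w t) := by
    intro t
    have h2 := hexp t (w t)
    have h3 := hQ t (w t)
    linarith [hdec t]
  have hchain : ∀ s t, s ≤ t → g (u t) (w t) ≤ g (u s) (w s) := by
    intro s t h
    induction t, h using Nat.le_induction with
    | base => exact le_rfl
    | succ n hn ih => exact (hmono n).trans ih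
  have hstrict : ∀ t, g (u (t + 1)) (w (t + 1)) = g (u t) (w t) → w (t + 1) = w t := by
    intro t h
    have h2 := hexp t (w t)
    have h1 := hdec t
    have h3 : (∑ i, u t i * (dotProduct (x i : Fin d → ℝ) ((show Fin d → ℝ from w t) - (show Fin d → ℝ from w (t + 1)))) ^ 2)
        + ζ * dotProduct ((show Fin d → ℝ from w t) - (show Fin d → ℝ from w (t + 1))) ((show Fin d → ℝ from w t) - (show Fin d → ℝ from w (t + 1))) ≤ 0 := by
      linarith
    have h4 : 0 ≤ ∑ i, u t i * (dotProduct (x i : Fin d → ℝ) ((show Fin d → ℝ from w t) - (show Fin d → ℝ from w (t + 1)))) ^ 2 :=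
      Finset.sum_nonneg fun i _ => mul_nonneg (hnn t i) (sq_nonneg _)
    have h5 : 0 ≤ dotProduct ((show Fin d → ℝ from w t) - (show Fin d → ℝ from w (t + 1))) ((show Fin d → ℝ from w t) - (show Fin d → ℝ from w (t + 1))) :=
      Finset.sum_nonneg fun j _ => mul_self_nonneg _
    have h6 : dotProduct ((show Fin d → ℝ from w t) - (show Fin d → ℝ from w (t + 1))) ((show Fin d → ℝ from w t) - (show Fin d → ℝ from w (t + 1))) = 0 := by
      nlinarith
    have h7 : (w t - w (t + 1) : Fin d → ℝ) = 0 := dotProduct_self_eq_zero.mp h6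
    have h8 : w t - w (t + 1) = 0 :=
      WithLp.ofLp_injective 2 (by rw [WithLp.ofLp_sub, WithLp.ofLp_zero]; exact h7)
    have := sub_eq_zero.mp h8
    exact this.symm
  -- determinism of the iteration
  have hdetu : ∀ p q, w p = w q → u p = u q := by
    intro p q h
    funext i
    rw [hu p i, hu q i, h]
  have hdetw : ∀ p q, w p = w q → w (p + 1) = w (q + 1) := by
    intro p q h
    refine WithLp.ofLp_injective 2 ?_
    rw [hw p, hw q, hdetu p q h]
  -- pigeonhole on the finitely many possible weight vectors
  obtain ⟨p, q, hpq, hfeq⟩ := Finite.exists_ne_map_eq_of_infinite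
    (fun k : ℕ => (fun i => decide ((r i - ⟪x i, w k⟫) ^ 2 < ε) : Fin M → Bool))
  have hupq : u p = u q := by
    funext i
    rw [hu p i, hu q i]
    exact if_congr (decide_eq_decide.mp (congrFun hfeq i)) rfl rfl
  -- wlog p < q
  have main : ∀ p q : ℕ, p < q → u p = u q →
      ∃ T : ℕ, ∀ t : ℕ, T ≤ t → w t = w T ∧ u t = u T := by
    intro p q hlt hu_eq
    have hwpq : w (p + 1) = w (q + 1) := by
      refine WithLp.ofLp_injective 2 ?_
      rw [hw p, hw q, hu_eq]
    set P := p + 1 with hP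
    have hueq : u P = u (q + 1) := hdetu _ _ hwpq
    have hgeq : g (u P) (w P) = g (u (q + 1)) (w (q + 1)) := by rw [hwpq, hueq]
    have hle1 : g (u (q + 1)) (w (q + 1)) ≤ g (u (P + 1)) (w (P + 1)) :=
      hchain (P + 1) (q + 1) (by omega)
    have hle2 : g (u (P + 1)) (w (P + 1)) ≤ g (u P) (w P) := hmono P
    have heq : g (u (P + 1)) (w (P + 1)) = g (u P) (w P) := le_antisymm hle2 (by linarith)
    have hfix : w (P + 1) = w P := hstrict P heq
    have hconst : ∀ k, w (P + k) = w P := by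
      intro k
      induction k with
      | zero => rfl
      | succ n ih =>
        exact (hdetw (P + n) P ih).trans hfix
    refine ⟨P, fun t ht => ?_⟩
    obtain ⟨k, rfl⟩ := Nat.exists_eq_add_of_le ht
    exact ⟨hconst k, hdetu _ _ (hconst k)⟩
  rcases lt_or_gt_of_ne hpq with h | h
  · exact main p q h hupq
  · exact main q p h hupq.symm
end

section
/- Let d, M be positive integers, x_1, …, x_M ∈ ℝ^d, r_1, …, r_M ∈ ℝ, ζ > 0, ε > 0. Define O(w) = Σ_{i=1}^M min((r_i − ⟨x_i, w⟩)², ε) + ζ‖w‖² and u*(w)_i = 1 if (r_i − ⟨x_i, w⟩)² < ε, else 0. Let w⁽⁰⁾ ∈ ℝ^d and for t ≥ 0 set u⁽ᵗ⁾ = u*(w⁽ᵗ⁾) and w⁽ᵗ⁺¹⁾ = (Σ_{i=1}^M u_i⁽ᵗ⁾ x_i x_iᵀ + ζ I)⁻¹ (Σ_{i=1}^M u_i⁽ᵗ⁾ r_i x_i). Then the sequence (O(w⁽ᵗ⁾))_{t≥0} is nonincreasing and bounded below by 0, and hence converges to a limit L ≥ 0. -/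
open scoped RealInnerProductSpace

/-- the capped-ℓ2 objective values along the reweighted iteration
are nonincreasing, nonnegative, and converge to a limit L ≥ 0. -/
theorem stmt_16 (d M : ℕ) (hd : 0 < d) (hM : 0 < M)
    (x : Fin M → EuclideanSpace ℝ (Fin d)) (r : Fin M → ℝ)
    (ζ ε : ℝ) (hζ : 0 < ζ) (hε : 0 < ε)
    (O : EuclideanSpace ℝ (Fin d) → ℝ)
    (hO : ∀ w', O w' = (∑ i, min ((r i - ⟪x i, w'⟫) ^ 2) ε) + ζ * ‖w'‖ ^ 2)
    (w : ℕ → EuclideanSpace ℝ (Fin d)) (u : ℕ → Fin M → ℝ)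
    (hu : ∀ t i, u t i = if (r i - ⟪x i, w t⟫) ^ 2 < ε then 1 else 0)
    (hw : ∀ t, w (t + 1) =
      ((∑ i, u t i • Matrix.vecMulVec (x i) (x i)) +
        ζ • (1 : Matrix (Fin d) (Fin d) ℝ))⁻¹.mulVec (∑ i, u t i • r i • x i)) :
    (∀ t : ℕ, O (w (t + 1)) ≤ O (w t)) ∧ (∀ t : ℕ, 0 ≤ O (w t)) ∧
    ∃ L : ℝ, 0 ≤ L ∧
      Filter.Tendsto (fun t : ℕ => O (w t)) Filter.atTop (nhds L) := by
  have dot_inner : ∀ a b : EuclideanSpace ℝ (Fin d),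
      dotProduct (a : Fin d → ℝ) (b : Fin d → ℝ) = ⟪a, b⟫ := by
    intro a b
    simp [dotProduct, PiLp.inner_apply, RCLike.inner_apply, mul_comm]
  have key : ∀ t, O (w (t + 1)) ≤ O (w t) := by
    intro t
    set c : Fin M → ℝ := u t with hc
    set v : EuclideanSpace ℝ (Fin d) := w t with hv
    set p : EuclideanSpace ℝ (Fin d) := w (t + 1) with hp
    have hc01 : ∀ i, c i = 0 ∨ c i = 1 := by
      intro i; rw [hc, hu t i]; split_ifs <;> simp
    have hcnn : ∀ i, 0 ≤ c i := by
      intro i; rcases hc01 i with h | h <;> rw [h] <;> norm_num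
    set A : Matrix (Fin d) (Fin d) ℝ :=
      (∑ i, c i • Matrix.vecMulVec (x i) (x i)) + ζ • (1 : Matrix (Fin d) (Fin d) ℝ) with hA
    set b : EuclideanSpace ℝ (Fin d) := ∑ i, c i • r i • x i with hb
    -- bilinear form of A
    have sumMulVec : ∀ (B : Fin M → Matrix (Fin d) (Fin d) ℝ) (z : Fin d → ℝ),
        (∑ i, B i).mulVec z = ∑ i, (B i).mulVec z := by
      intro B z
      ext j
      simp only [Matrix.mulVec, dotProduct, Matrix.sum_apply, Finset.sum_mul,
        Finset.sum_apply]
      rw [Finset.sum_comm]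
    have dotSum : ∀ (g : Fin d → ℝ) (f : Fin M → Fin d → ℝ),
        dotProduct g (∑ i, f i) = ∑ i, dotProduct g (f i) := by
      intro g f
      simp only [dotProduct, Finset.sum_apply, Finset.mul_sum]
      rw [Finset.sum_comm]
    have bil : ∀ hv z : Fin d → ℝ, dotProduct hv (A.mulVec z)
        = ∑ i, c i * dotProduct (x i) z * dotProduct (x i) hv
          + ζ * dotProduct hv z := by
      intro g z
      simp only [hA, Matrix.add_mulVec, Matrix.smul_mulVec, Matrix.one_mulVec,
        dotProduct_add, dotProduct_smul, smul_eq_mul]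
      congr 1
      have hvmv : ((∑ i, c i • Matrix.vecMulVec (x i) (x i)).mulVec z)
          = ∑ i, c i • (dotProduct (x i) z • (x i : Fin d → ℝ)) := by
        rw [sumMulVec]
        refine Finset.sum_congr rfl fun i _ => ?_
        rw [Matrix.smul_mulVec]
        congr 1
        ext j
        simp [Matrix.mulVec, Matrix.vecMulVec_apply, dotProduct, Finset.mul_sum,
          mul_comm, mul_left_comm]
      rw [hvmv, dotSum]
      refine Finset.sum_congr rfl fun i _ => ?_
      simp only [dotProduct, PiLp.smul_apply, Pi.smul_apply, smul_eq_mul,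
        ← Finset.mul_sum]
      try (rw [Finset.mul_sum]; exact Finset.sum_congr rfl fun j _ => by ring)
    -- dot with b
    have hb_dot : ∀ g : Fin d → ℝ, dotProduct g (b : Fin d → ℝ)
        = ∑ i, c i * r i * dotProduct (x i) g := by
      intro g
      have : (b : Fin d → ℝ) = ∑ i, c i • r i • (x i : Fin d → ℝ) := by
        rw [hb]; simp [WithLp.ofLp_sum]
      rw [this, dotSum]
      refine Finset.sum_congr rfl fun i _ => ?_
      simp only [dotProduct, PiLp.smul_apply, Pi.smul_apply, smul_eq_mul,
        ← Finset.mul_sum]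
      try (rw [Finset.mul_sum]; exact Finset.sum_congr rfl fun j _ => by ring)
    -- A is positive definite
    have hherm : A.IsHermitian := by
      rw [Matrix.IsHermitian]
      ext i j
      simp [hA, Matrix.conjTranspose_apply, Matrix.add_apply, Matrix.sum_apply,
        Matrix.smul_apply, Matrix.vecMulVec_apply, Matrix.one_apply, mul_comm,
        mul_left_comm, eq_comm]
    have hpos : A.PosDef := by
      refine Matrix.PosDef.of_dotProduct_mulVec_pos hherm fun z hz => ?_
      have hsz : star z = z := by
        funext j; simp
      rw [hsz, bil z z]
      have h1 : 0 ≤ ∑ i, c i * dotProduct (x i) z * dotProduct (x i) z := by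
        apply Finset.sum_nonneg
        intro i _
        rw [mul_assoc]
        exact mul_nonneg (hcnn i) (mul_self_nonneg _)
      have h2 : 0 < dotProduct z z := by
        obtain ⟨j, hj⟩ := Function.ne_iff.mp hz
        apply Finset.sum_pos'
        · intro k _; exact mul_self_nonneg _
        · exact ⟨j, Finset.mem_univ j, mul_self_pos.mpr hj⟩
      have := mul_pos hζ h2
      linarith
    have hunit : IsUnit A.det := (Matrix.isUnit_iff_isUnit_det A).mp hpos.isUnit
    -- normal equation
    have hAp : A.mulVec (p : Fin d → ℝ) = (b : Fin d → ℝ) := by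
      rw [hp, hw t]
      show A.mulVec (A⁻¹.mulVec (∑ i, c i • r i • (x i : Fin d → ℝ))) = _
      rw [Matrix.mulVec_mulVec, Matrix.mul_nonsing_inv A hunit, Matrix.one_mulVec]
      rw [hb]; simp [WithLp.ofLp_sum]
    have normal : ∀ g : EuclideanSpace ℝ (Fin d),
        ∑ i, c i * ⟪x i, p⟫ * ⟪x i, g⟫ + ζ * ⟪p, g⟫ = ∑ i, c i * r i * ⟪x i, g⟫ := by
      intro g
      have := congrArg (fun z => dotProduct (g : Fin d → ℝ) z) hAp
      simp only at this
      rw [bil, hb_dot] at this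
      simpa only [dot_inner, real_inner_comm g p] using this
    -- objective pieces
    have hmin_eq : ∀ i, min ((r i - ⟪x i, v⟫) ^ 2) ε
        = c i * (r i - ⟪x i, v⟫) ^ 2 + (1 - c i) * ε := by
      intro i
      rw [hc, hu t i]
      split_ifs with hlt
      · rw [min_eq_left hlt.le]; ring
      · push_neg at hlt
        rw [min_eq_right hlt]; ring
    have hmin_le : ∀ i, min ((r i - ⟪x i, p⟫) ^ 2) ε
        ≤ c i * (r i - ⟪x i, p⟫) ^ 2 + (1 - c i) * ε := by
      intro i
      rw [hc, hu t i]
      split_ifs with hlt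
      · simpa using min_le_left ((r i - ⟪x i, p⟫) ^ 2) ε
      · simpa using min_le_right ((r i - ⟪x i, p⟫) ^ 2) ε
    -- surrogate minimization
    set h : EuclideanSpace ℝ (Fin d) := v - p with hh
    have hvp : v = p + h := by rw [hh]; abel
    have hxsplit : ∀ i, r i - ⟪x i, v⟫ = (r i - ⟪x i, p⟫) - ⟪x i, h⟫ := by
      intro i; rw [hvp, inner_add_right]; ring
    have hnorm : ‖v‖ ^ 2 = ‖p‖ ^ 2 + 2 * ⟪p, h⟫ + ‖h‖ ^ 2 := by
      rw [hvp, norm_add_sq_real]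
    have gmin : (∑ i, c i * (r i - ⟪x i, p⟫) ^ 2) + ζ * ‖p‖ ^ 2
        ≤ (∑ i, c i * (r i - ⟪x i, v⟫) ^ 2) + ζ * ‖v‖ ^ 2 := by
      have expand : (∑ i, c i * (r i - ⟪x i, v⟫) ^ 2) + ζ * ‖v‖ ^ 2
          = ((∑ i, c i * (r i - ⟪x i, p⟫) ^ 2) + ζ * ‖p‖ ^ 2)
            + ((∑ i, c i * ⟪x i, h⟫ ^ 2) + ζ * ‖h‖ ^ 2)
            + 2 * ((∑ i, c i * ⟪x i, p⟫ * ⟪x i, h⟫ + ζ * ⟪p, h⟫)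
                   - ∑ i, c i * r i * ⟪x i, h⟫) := by
        have termeq : ∀ i, c i * (r i - ⟪x i, v⟫) ^ 2
            = c i * (r i - ⟪x i, p⟫) ^ 2 + c i * ⟪x i, h⟫ ^ 2
              + 2 * (c i * ⟪x i, p⟫ * ⟪x i, h⟫ - c i * r i * ⟪x i, h⟫) := by
          intro i; rw [hxsplit i]; ring
        rw [Finset.sum_congr rfl fun i _ => termeq i, Finset.sum_add_distrib,
          Finset.sum_add_distrib, ← Finset.mul_sum, Finset.sum_sub_distrib, hnorm]
        ring
      rw [expand, normal h]
      have q1 : 0 ≤ ∑ i, c i * ⟪x i, h⟫ ^ 2 :=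
        Finset.sum_nonneg fun i _ => mul_nonneg (hcnn i) (sq_nonneg _)
      have q2 : 0 ≤ ζ * ‖h‖ ^ 2 := mul_nonneg hζ.le (sq_nonneg _)
      linarith
    -- assemble
    rw [hO, hO]
    calc (∑ i, min ((r i - ⟪x i, p⟫) ^ 2) ε) + ζ * ‖p‖ ^ 2
        ≤ (∑ i, (c i * (r i - ⟪x i, p⟫) ^ 2 + (1 - c i) * ε)) + ζ * ‖p‖ ^ 2 := by
          exact add_le_add_left (Finset.sum_le_sum fun i _ => hmin_le i) _
      _ = ((∑ i, c i * (r i - ⟪x i, p⟫) ^ 2) + ζ * ‖p‖ ^ 2) + ∑ i, (1 - c i) * ε := by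
          rw [Finset.sum_add_distrib]; ring
      _ ≤ ((∑ i, c i * (r i - ⟪x i, v⟫) ^ 2) + ζ * ‖v‖ ^ 2) + ∑ i, (1 - c i) * ε := by
          linarith [gmin]
      _ = (∑ i, min ((r i - ⟪x i, v⟫) ^ 2) ε) + ζ * ‖v‖ ^ 2 := by
          have hsum : (∑ i, min ((r i - ⟪x i, v⟫) ^ 2) ε)
              = ∑ i, (c i * (r i - ⟪x i, v⟫) ^ 2 + (1 - c i) * ε) :=
            Finset.sum_congr rfl fun i _ => hmin_eq i
          rw [hsum, Finset.sum_add_distrib]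
          ring
  have nonneg : ∀ t, 0 ≤ O (w t) := by
    intro t
    rw [hO]
    have h1 : 0 ≤ ∑ i, min ((r i - ⟪x i, w t⟫) ^ 2) ε :=
      Finset.sum_nonneg fun i _ => le_min (sq_nonneg _) hε.le
    have h2 : 0 ≤ ζ * ‖w t‖ ^ 2 := mul_nonneg hζ.le (sq_nonneg _)
    linarith
  refine ⟨key, nonneg, ⨅ t, O (w t), le_ciInf nonneg, ?_⟩
  exact tendsto_atTop_ciInf (antitone_nat_of_succ_le key)
    ⟨0, fun y ⟨t, ht⟩ => ht ▸ nonneg t⟩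
end
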